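/- If σ > 0, m ≥ 0 and a ∈ C^∞(ℝ^{2d}) satisfies the anisotropic homogeneity a(λx, λ^σ ξ) = λ^m a(x,ξ) for all (x,ξ) ∈ ℝ^{2d} \ {0} and all λ > 0, then a ∈ G^{m,σ}. -/

import Mathlib

noncomputable section

open Real Filter MeasureTheory Set
open scoped BigOperators Topology

abbrev Rd (d : ℕ) := EuclideanSpace ℝ (Fin d)

/-- Iterated directional derivative along a list of directions. -/
def iterDeriv {E F : Type*} [NormedAddCommGroup E] [NormedSpace ℝ E]
    [NormedAddCommGroup F] [NormedSpace ℝ F] : List E → (E → F) → E → F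
  | [], a => a
  | v :: l, a => fun p => fderiv ℝ (iterDeriv l a) p v

/-- Directions in the `x` variables according to multi-index `α`. -/
def xDirs {d : ℕ} (α : Fin d → ℕ) : List (Rd d × Rd d) :=
  ((List.finRange d).map fun j =>
    List.replicate (α j) ((EuclideanSpace.single j (1:ℝ), (0 : Rd d)))).flatten

/-- Directions in the `ξ` variables according to multi-index `β`. -/
def xiDirs {d : ℕ} (β : Fin d → ℕ) : List (Rd d × Rd d) :=
  ((List.finRange d).map fun j =>
    List.replicate (β j) (((0 : Rd d), EuclideanSpace.single j (1:ℝ)))).flatten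

/-- The anisotropic weight `θ_σ(x,ξ) = 1 + |x| + |ξ|^(1/σ)`. -/
def theta (σ : ℝ) {d : ℕ} (p : Rd d × Rd d) : ℝ := 1 + ‖p.1‖ + ‖p.2‖ ^ (1/σ)

/-- The anisotropic Shubin symbol class `G^{m,σ}`:
`a` is smooth and `|∂_x^α ∂_ξ^β a(x,ξ)| ≤ C_{α,β} θ_σ(x,ξ)^(m - |α| - σ|β|)`. -/
def IsShubin {d : ℕ} (σ m : ℝ) (a : Rd d × Rd d → ℂ) : Prop :=
  ContDiff ℝ (⊤ : ℕ∞) a ∧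
  ∀ α β : Fin d → ℕ, ∃ C > 0, ∀ x ξ : Rd d,
    ‖iterDeriv (xDirs α ++ xiDirs β) a (x, ξ)‖ ≤
      C * theta σ (x, ξ) ^ (m - (∑ j, (α j : ℝ)) - σ * (∑ j, (β j : ℝ)))


def Sc (σ : ℝ) {d : ℕ} (l : ℝ) : (Rd d × Rd d) →L[ℝ] (Rd d × Rd d) :=
  (l • ContinuousLinearMap.id ℝ (Rd d)).prodMap ((l ^ σ) • ContinuousLinearMap.id ℝ (Rd d))

lemma Sc_apply (σ : ℝ) {d : ℕ} (l : ℝ) (p : Rd d × Rd d) :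
    Sc σ l p = (l • p.1, l ^ σ • p.2) := rfl

lemma iterDeriv_contDiff {E : Type*} [NormedAddCommGroup E] [NormedSpace ℝ E]
    (L : List E) {g : E → ℂ} (hg : ContDiff ℝ (⊤:ℕ∞) g) :
    ContDiff ℝ (⊤:ℕ∞) (iterDeriv L g) := by
  induction L with
  | nil => exact hg
  | cons v l ih =>
      have h1 : ContDiff ℝ (⊤:ℕ∞) (fderiv ℝ (iterDeriv l g)) := ih.fderiv_right (by exact_mod_cast le_top)
      exact (ContinuousLinearMap.apply ℝ ℂ v).contDiff.comp h1

lemma homog_step {d : ℕ} {σ : ℝ} {g : Rd d × Rd d → ℂ}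
    (hg : ContDiff ℝ (⊤:ℕ∞) g) {μ w : ℝ} {v : Rd d × Rd d}
    (hv : ∀ l : ℝ, 0 < l → Sc σ l v = l ^ w • v)
    (H : ∀ p : Rd d × Rd d, p ≠ 0 → ∀ l : ℝ, 0 < l → g (Sc σ l p) = (l ^ μ : ℝ) • g p) :
    ∀ p : Rd d × Rd d, p ≠ 0 → ∀ l : ℝ, 0 < l →
      fderiv ℝ g (Sc σ l p) v = (l ^ (μ - w) : ℝ) • fderiv ℝ g p v := by
  intro p hp l hl
  have hd := hg.differentiable (by simp)
  have hcomp : fderiv ℝ (g ∘ Sc σ l) p = (fderiv ℝ g (Sc σ l p)).comp (Sc σ l : (Rd d × Rd d) →L[ℝ] (Rd d × Rd d)) := by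
    rw [fderiv_comp p (hd _) ((Sc σ l).differentiableAt), (Sc σ l).fderiv]
  have hev : (g ∘ Sc σ l) =ᶠ[𝓝 p] fun q => (l ^ μ : ℝ) • g q := by
    filter_upwards [IsOpen.mem_nhds isOpen_compl_singleton hp] with q hq
    exact H q hq l hl
  have h2 : fderiv ℝ (g ∘ Sc σ l) p = (l ^ μ : ℝ) • fderiv ℝ g p := by
    rw [hev.fderiv_eq, fderiv_fun_const_smul (hd p)]
  have h3 : fderiv ℝ g (Sc σ l p) (Sc σ l v) = (l ^ μ : ℝ) • fderiv ℝ g p v := by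
    have := congrArg (fun T => T v) (hcomp.symm.trans h2)
    simpa using this
  rw [hv l hl, (fderiv ℝ g (Sc σ l p)).map_smul] at h3
  have hlw : (l:ℝ) ^ w ≠ 0 := (Real.rpow_pos_of_pos hl w).ne'
  have h4 : fderiv ℝ g (Sc σ l p) v = ((l ^ w)⁻¹ * l ^ μ) • fderiv ℝ g p v := by
    rw [← smul_smul, ← h3, smul_smul, inv_mul_cancel₀ hlw, one_smul]
  rw [h4, Real.rpow_sub hl, div_eq_inv_mul]

lemma iter_homog {d : ℕ} {σ : ℝ}
    (L : List ((Rd d × Rd d) × ℝ)) {g : Rd d × Rd d → ℂ}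
    (hg : ContDiff ℝ (⊤:ℕ∞) g) {μ : ℝ}
    (hL : ∀ q ∈ L, ∀ l : ℝ, 0 < l → Sc σ l q.1 = l ^ q.2 • q.1)
    (H : ∀ p : Rd d × Rd d, p ≠ 0 → ∀ l : ℝ, 0 < l → g (Sc σ l p) = (l ^ μ : ℝ) • g p) :
    ∀ p : Rd d × Rd d, p ≠ 0 → ∀ l : ℝ, 0 < l →
      iterDeriv (L.map Prod.fst) g (Sc σ l p) =
        (l ^ (μ - (L.map Prod.snd).sum) : ℝ) • iterDeriv (L.map Prod.fst) g p := by
  induction L with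
  | nil => simpa [iterDeriv] using H
  | cons vw L ih =>
      intro p hp l hl
      have hprev := ih (fun q hq => hL q (List.mem_cons_of_mem _ hq))
      have hstep := homog_step (iterDeriv_contDiff (L.map Prod.fst) hg)
        (hL vw List.mem_cons_self) hprev p hp l hl
      simp only [List.map_cons, List.sum_cons, iterDeriv]
      rw [show μ - (vw.2 + (L.map Prod.snd).sum) = μ - (L.map Prod.snd).sum - vw.2 by ring]
      exact hstep

lemma mem_xDirs {d : ℕ} {α : Fin d → ℕ} {v : Rd d × Rd d} (hv : v ∈ xDirs α) :
    ∃ j, v = (EuclideanSpace.single j (1:ℝ), 0) := by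
  simp only [xDirs, List.mem_flatten, List.mem_map] at hv
  obtain ⟨l, ⟨j, _, rfl⟩, hvl⟩ := hv
  exact ⟨j, List.eq_of_mem_replicate hvl⟩

lemma mem_xiDirs {d : ℕ} {β : Fin d → ℕ} {v : Rd d × Rd d} (hv : v ∈ xiDirs β) :
    ∃ j, v = (0, EuclideanSpace.single j (1:ℝ)) := by
  simp only [xiDirs, List.mem_flatten, List.mem_map] at hv
  obtain ⟨l, ⟨j, _, rfl⟩, hvl⟩ := hv
  exact ⟨j, List.eq_of_mem_replicate hvl⟩

lemma length_xDirs {d : ℕ} (α : Fin d → ℕ) : (xDirs α).length = ∑ j, α j := by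
  simp [xDirs, List.length_flatten, List.map_map, Function.comp_def, Fin.sum_univ_def]

lemma length_xiDirs {d : ℕ} (β : Fin d → ℕ) : (xiDirs β).length = ∑ j, β j := by
  simp [xiDirs, List.length_flatten, List.map_map, Function.comp_def, Fin.sum_univ_def]

lemma sum_map_const {E : Type*} (L : List E) (c : ℝ) :
    (L.map (fun _ => c)).sum = L.length * c := by
  induction L with
  | nil => simp
  | cons v l ih => simp [ih]; ring

/-- If `a ∈ C^∞(ℝ^{2d})` is anisotropically homogeneous of degree `m ≥ 0`,
i.e. `a(λx, λ^σ ξ) = λ^m a(x,ξ)` for `(x,ξ) ≠ 0` and `λ > 0`, then `a ∈ G^{m,σ}`. -/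
theorem statement1 {d : ℕ} (σ m : ℝ) (hσ : 0 < σ) (hm : 0 ≤ m)
    (a : Rd d × Rd d → ℂ) (ha : ContDiff ℝ (⊤ : ℕ∞) a)
    (hhom : ∀ p : Rd d × Rd d, p ≠ 0 → ∀ l : ℝ, 0 < l →
      a (l • p.1, l ^ σ • p.2) = ((l ^ m : ℝ) : ℂ) * a p) :
    IsShubin σ m a := by
  refine ⟨ha, ?_⟩
  intro α β
  set L : List ((Rd d × Rd d) × ℝ) :=
    (xDirs α).map (fun v => (v, (1:ℝ))) ++ (xiDirs β).map (fun v => (v, σ)) with hLdef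
  have hmapfst : L.map Prod.fst = xDirs α ++ xiDirs β := by
    simp [hLdef, List.map_map, Function.comp_def]
  have hsum : (L.map Prod.snd).sum = (∑ j, (α j : ℝ)) + σ * (∑ j, (β j : ℝ)) := by
    simp only [hLdef, List.map_append, List.map_map, Function.comp_def, List.sum_append]
    rw [sum_map_const, sum_map_const, length_xDirs, length_xiDirs]
    push_cast [Fin.sum_univ_def]
    simp only [List.map_map, Function.comp_def]
    ring
  set μ : ℝ := m - (∑ j, (α j : ℝ)) - σ * (∑ j, (β j : ℝ)) with hμ
  have hL : ∀ q ∈ L, ∀ l : ℝ, 0 < l → Sc σ l q.1 = l ^ q.2 • q.1 := by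
    intro q hq l hl
    rw [hLdef, List.mem_append] at hq
    rcases hq with hq | hq
    · obtain ⟨v, hv, rfl⟩ := List.mem_map.1 hq
      obtain ⟨j, rfl⟩ := mem_xDirs hv
      rw [Sc_apply]
      simp [Prod.smul_mk, Real.rpow_one]
    · obtain ⟨v, hv, rfl⟩ := List.mem_map.1 hq
      obtain ⟨j, rfl⟩ := mem_xiDirs hv
      rw [Sc_apply]
      simp [Prod.smul_mk]
  have H : ∀ p : Rd d × Rd d, p ≠ 0 → ∀ l : ℝ, 0 < l →
      a (Sc σ l p) = (l ^ m : ℝ) • a p := by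
    intro p hp l hl
    rw [Sc_apply, hhom p hp l hl, Complex.real_smul]
  have hKhom := iter_homog L ha hL H
  rw [hmapfst, hsum] at hKhom
  have hexp : m - ((∑ j, (α j : ℝ)) + σ * (∑ j, (β j : ℝ))) = μ := by rw [hμ]; ring
  simp only [hexp] at hKhom
  set K := iterDeriv (xDirs α ++ xiDirs β) a with hK
  have hKcont : Continuous K := (iterDeriv_contDiff _ ha).continuous
  obtain ⟨C0, hC0⟩ := (isCompact_closedBall (0 : Rd d × Rd d) 1).exists_bound_of_continuousOn
    hKcont.continuousOn
  refine ⟨max C0 1, lt_of_lt_of_le one_pos (le_max_right _ _), ?_⟩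
  intro x ξ
  set p : Rd d × Rd d := (x, ξ) with hpdef
  by_cases hp : p = 0
  · have hx : x = 0 := congrArg Prod.fst hp
    have hξ : ξ = 0 := congrArg Prod.snd hp
    have hθ : theta σ (x, ξ) = 1 := by
      simp [theta, hx, hξ, one_div, Real.zero_rpow (inv_ne_zero hσ.ne')]
    rw [hθ, Real.one_rpow, mul_one]
    have : p ∈ Metric.closedBall (0 : Rd d × Rd d) 1 := by
      simp [hp]
    exact le_trans (hC0 p this) (le_max_left _ _)
  · set l : ℝ := theta σ (x, ξ) with hldef
    have hl1 : 1 ≤ l := by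
      have h1 : (0:ℝ) ≤ ‖x‖ := norm_nonneg _
      have h2 : (0:ℝ) ≤ ‖ξ‖ ^ (1/σ) := Real.rpow_nonneg (norm_nonneg _) _
      simp only [hldef, theta]
      linarith
    have hl : 0 < l := lt_of_lt_of_le one_pos hl1
    have hlσ : 0 < l ^ σ := Real.rpow_pos_of_pos hl σ
    have hx_le : ‖x‖ ≤ l := by
      have h2 : (0:ℝ) ≤ ‖ξ‖ ^ (1/σ) := Real.rpow_nonneg (norm_nonneg _) _
      simp only [hldef, theta]; linarith
    have hξ_le : ‖ξ‖ ≤ l ^ σ := by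
      have h1 : (‖ξ‖ ^ (1/σ)) ^ σ ≤ l ^ σ := by
        apply Real.rpow_le_rpow (Real.rpow_nonneg (norm_nonneg _) _) _ hσ.le
        have h2 : (0:ℝ) ≤ ‖x‖ := norm_nonneg _
        simp only [hldef, theta]; linarith
      rwa [← Real.rpow_mul (norm_nonneg _), one_div, inv_mul_cancel₀ hσ.ne',
        Real.rpow_one] at h1
    set q : Rd d × Rd d := (l⁻¹ • x, (l ^ σ)⁻¹ • ξ) with hqdef
    have hq0 : q ≠ 0 := by
      intro hq
      apply hp
      have h1 : l⁻¹ • x = 0 := congrArg Prod.fst hq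
      have h2 : (l ^ σ)⁻¹ • ξ = 0 := congrArg Prod.snd hq
      have hx0 : x = 0 := by
        rcases smul_eq_zero.1 h1 with h | h
        · exact absurd h (inv_ne_zero hl.ne')
        · exact h
      have hξ0 : ξ = 0 := by
        rcases smul_eq_zero.1 h2 with h | h
        · exact absurd h (inv_ne_zero hlσ.ne')
        · exact h
      simp [hpdef, hx0, hξ0]
    have hSq : Sc σ l q = p := by
      rw [Sc_apply]
      apply Prod.ext
      · show l • (l⁻¹ • x) = x
        rw [smul_smul, mul_inv_cancel₀ hl.ne', one_smul]
      · show l ^ σ • ((l ^ σ)⁻¹ • ξ) = ξ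
        rw [smul_smul, mul_inv_cancel₀ hlσ.ne', one_smul]
    have hqball : q ∈ Metric.closedBall (0 : Rd d × Rd d) 1 := by
      rw [Metric.mem_closedBall, dist_zero_right]
      rw [Prod.norm_def]
      apply max_le
      · show ‖l⁻¹ • x‖ ≤ 1
        rw [norm_smul, norm_inv, Real.norm_of_nonneg hl.le]
        rw [inv_mul_le_iff₀ hl]
        linarith
      · show ‖(l ^ σ)⁻¹ • ξ‖ ≤ 1
        rw [norm_smul, norm_inv, Real.norm_of_nonneg hlσ.le]
        rw [inv_mul_le_iff₀ hlσ]
        linarith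
    have hhomq := hKhom q hq0 l hl
    rw [hSq] at hhomq
    have hμpos : 0 < l ^ μ := Real.rpow_pos_of_pos hl μ
    calc ‖K p‖ = l ^ μ * ‖K q‖ := by
          rw [hhomq, norm_smul, Real.norm_of_nonneg hμpos.le]
      _ ≤ l ^ μ * C0 := by
          exact mul_le_mul_of_nonneg_left (hC0 q hqball) hμpos.le
      _ ≤ max C0 1 * l ^ μ := by
          rw [mul_comm]
          exact mul_le_mul_of_nonneg_right (le_max_left _ _) hμpos.le
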